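/- For any α, β ∈ ℕⁿ, ξ^β·(ξ^α ∗ z^{α+β}) = z^β·(ξ^{α+β} ∗ z^α) in ℂ[ξ,z], where ∗ = ∗_{t=1}; indeed both sides equal Σ_{γ ≤ β} C(β,γ)·((α+β)!/(α+β-γ)!)·(ξ^{α+β-γ} ∗ z^{α+β-γ}). -/

import Mathlib

open MvPolynomial

noncomputable section

/-- ℂ[ξ,z] in 2n variables: `Sum.inl i` is ξᵢ, `Sum.inr i` is zᵢ. -/
abbrev P (n : ℕ) := MvPolynomial (Fin n ⊕ Fin n) ℂ

variable {n : ℕ}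

/-- ∂ᵢ = ∂/∂zᵢ -/
def dz (i : Fin n) : Module.End ℂ (P n) := (pderiv (Sum.inr i)).toLinearMap
/-- δᵢ = ∂/∂ξᵢ -/
def dxi (i : Fin n) : Module.End ℂ (P n) := (pderiv (Sum.inl i)).toLinearMap
/-- ∂^α (the factors pairwise commute, so the ordered product is the mathematical one) -/
def Dz (α : Fin n → ℕ) : Module.End ℂ (P n) := (List.ofFn (fun i => dz i ^ α i)).prod
/-- δ^α -/
def Dxi (α : Fin n → ℕ) : Module.End ℂ (P n) := (List.ofFn (fun i => dxi i ^ α i)).prod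
/-- |α| -/
def mdeg (α : Fin n → ℕ) : ℕ := ∑ i, α i
/-- α! -/
def mfact (α : Fin n → ℕ) : ℕ := ∏ i, (α i).factorial

/-- The deformed product `f ∗_t g = Σ_{α,β} ((-t)^{|α|+|β|}/(α!β!)) (δ^β ∂^α f)(∂^β δ^α g)`. -/
def astar (t : ℂ) (f g : P n) : P n :=
  ∑ᶠ (α : Fin n → ℕ), ∑ᶠ (β : Fin n → ℕ),
    ((-t) ^ (mdeg α + mdeg β) / ((mfact α : ℂ) * (mfact β : ℂ))) •
      (Dxi β (Dz α f) * Dz β (Dxi α g))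

/-- Λ = Σᵢ δᵢ∂ᵢ -/
def Lam : Module.End ℂ (P n) := ∑ i, dxi i * dz i
/-- Φ_t = e^{tΛ} -/
def Phi (t : ℂ) (f : P n) : P n := ∑ᶠ m : ℕ, (t ^ m / (m.factorial : ℂ)) • ((Lam ^ m) f)

def xiv (i : Fin n) : P n := X (Sum.inl i)
def zv (i : Fin n) : P n := X (Sum.inr i)
def XiPow (α : Fin n → ℕ) : P n := ∏ i, xiv i ^ α i
def ZvPow (α : Fin n → ℕ) : P n := ∏ i, zv i ^ α i
def mulXi (i : Fin n) : Module.End ℂ (P n) := LinearMap.mulLeft ℂ (xiv i)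
def mulZ (i : Fin n) : Module.End ℂ (P n) := LinearMap.mulLeft ℂ (zv i)

/-- λ(ξ): the image of λ ∈ ℂ[ξ] in ℂ[ξ,z] -/
def ofXi (l : MvPolynomial (Fin n) ℂ) : P n := rename Sum.inl l
/-- p(z): the image of p ∈ ℂ[z] in ℂ[ξ,z] -/
def ofZ (p : MvPolynomial (Fin n) ℂ) : P n := rename Sum.inr p



/-! ### Auxiliary development -/

section Aux

open Finset

/-- one-dimensional alternating Vandermonde identity -/
lemma aux_key_sum : ∀ (b a e : ℕ),
    ∑ g ∈ Finset.range (e+1), (-1:ℂ)^g * (b.choose g : ℂ) * (((a + b - g).choose (e - g) : ℕ) : ℂ)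
      = (a.choose e : ℂ)
  | 0, a, e => by
    rw [Finset.sum_eq_single 0 (fun g _ hg0 => by
        rw [Nat.choose_eq_zero_of_lt (Nat.pos_of_ne_zero hg0)]
        push_cast
        ring)
      (fun h => absurd (Finset.mem_range.mpr (Nat.succ_pos e)) h)]
    simp
  | (b+1), a, e => by
    have harr : ∀ h : ℕ, a + 1 + b - (h+1) = a + b - h := fun h => by omega
    have harr2 : a + (b+1) = a + 1 + b := by omega
    have ih1 := aux_key_sum b (a+1) e
    rw [Finset.sum_range_succ'] at ih1 ⊢
    simp only [harr, harr2, Nat.choose_succ_succ b, Nat.choose_zero_right, Nat.cast_one,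
      Nat.cast_add, pow_zero, one_mul, Nat.sub_zero] at ih1 ⊢
    have hsplit : ∀ h : ℕ,
        (-1:ℂ)^(h+1) * (((b.choose h : ℕ) : ℂ) + ((b.choose (h+1) : ℕ) : ℂ)) *
            (((a + b - h).choose (e - (h+1)) : ℕ) : ℂ) =
          (-1:ℂ)^(h+1) * ((b.choose (h+1) : ℕ) : ℂ) *
              (((a + b - h).choose (e - (h+1)) : ℕ) : ℂ) +
            (-1:ℂ)^(h+1) * ((b.choose h : ℕ) : ℂ) *
              (((a + b - h).choose (e - (h+1)) : ℕ) : ℂ) := fun h => by ring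
    rw [Finset.sum_congr rfl fun h _ => hsplit h, Finset.sum_add_distrib]
    cases e with
    | zero =>
        simp
    | succ e' =>
        have ih2 := aux_key_sum b a e'
        have harr3 : ∀ h : ℕ, e' + 1 - (h+1) = e' - h := fun h => by omega
        simp only [harr3] at ih1 ⊢
        have hneg : ∀ h : ℕ,
            (-1:ℂ)^(h+1) * ((b.choose h : ℕ) : ℂ) * (((a + b - h).choose (e' - h) : ℕ) : ℂ) =
            -((-1:ℂ)^h * ((b.choose h : ℕ) : ℂ) * (((a + b - h).choose (e' - h) : ℕ) : ℂ)) :=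
          fun h => by ring
        rw [Finset.sum_congr rfl fun h _ => hneg h, Finset.sum_neg_distrib]
        have hpas : ((a+1).choose (e'+1) : ℂ) = (a.choose e' : ℂ) + (a.choose (e'+1) : ℂ) := by
          exact_mod_cast congrArg (Nat.cast (R := ℂ)) (Nat.choose_succ_succ' a e')
        linear_combination ih1 - ih2 + hpas

lemma aux_descFactorial_mul_sub (m g d : ℕ) :
    m.descFactorial g * (m - g).descFactorial d = m.descFactorial (g + d) := by
  induction d with
  | zero => simp
  | succ d ih =>
      rw [Nat.descFactorial_succ, show g + (d+1) = (g+d) + 1 from rfl,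
        Nat.descFactorial_succ, ← ih, Nat.sub_sub]
      ring

/-- one-dimensional coefficient identity -/
lemma aux_key (a b e : ℕ) :
    (-1:ℂ)^e / (e.factorial : ℂ) * ((a.descFactorial e : ℕ) * (((a+b).descFactorial e : ℕ) : ℂ)) =
      ∑ g ∈ Finset.Iic e, (((b.choose g) * ((a+b).descFactorial g) : ℕ) : ℂ) *
        ((-1:ℂ)^(e-g) / (((e-g).factorial : ℕ) : ℂ) *
          ((((a+b-g).descFactorial (e-g) : ℕ) : ℂ) * (((a+b-g).descFactorial (e-g) : ℕ) : ℂ))) := by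
  have hterm : ∀ g ∈ Finset.Iic e,
      (((b.choose g) * ((a+b).descFactorial g) : ℕ) : ℂ) *
        ((-1:ℂ)^(e-g) / (((e-g).factorial : ℕ) : ℂ) *
          ((((a+b-g).descFactorial (e-g) : ℕ) : ℂ) * (((a+b-g).descFactorial (e-g) : ℕ) : ℂ))) =
      (((a+b).descFactorial e : ℕ) : ℂ) * (-1:ℂ)^e *
        ((-1:ℂ)^g * (b.choose g : ℂ) * (((a + b - g).choose (e - g) : ℕ) : ℂ)) := by
    intro g hg
    have hge : g ≤ e := Finset.mem_Iic.mp hg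
    have hfne : (((e-g).factorial : ℕ) : ℂ) ≠ 0 := Nat.cast_ne_zero.mpr (Nat.factorial_ne_zero _)
    have h2 : (((a+b-g).descFactorial (e-g) : ℕ) : ℂ) =
        (((e-g).factorial : ℕ) : ℂ) * (((a+b-g).choose (e-g) : ℕ) : ℂ) := by
      exact_mod_cast congrArg (Nat.cast (R := ℂ))
        (Nat.descFactorial_eq_factorial_mul_choose (a+b-g) (e-g))
    have h1 : (((a+b).descFactorial g : ℕ) : ℂ) * (((a+b-g).descFactorial (e-g) : ℕ) : ℂ) =
        (((a+b).descFactorial e : ℕ) : ℂ) := by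
      rw [← Nat.cast_mul, aux_descFactorial_mul_sub, Nat.add_sub_cancel' hge]
    have hsgn : (-1:ℂ)^(e-g) = (-1:ℂ)^e * (-1:ℂ)^g := by
      rw [← pow_add, show e + g = (e - g) + 2 * g by omega, pow_add, pow_mul]
      norm_num
    rw [h2] at h1
    push_cast
    push_cast at h1 h2
    rw [hsgn, h2]
    field_simp
    linear_combination ((b.choose g : ℂ) *
      (((a+b-g).choose (e-g) : ℕ) : ℂ)) * h1
  rw [Finset.sum_congr rfl hterm, ← Finset.mul_sum]
  have hIic : Finset.Iic e = Finset.range (e+1) := by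
    ext x; simp [Nat.lt_succ_iff]
  rw [hIic, aux_key_sum b a e]
  have hA : ((a.descFactorial e : ℕ) : ℂ) = ((e.factorial : ℕ) : ℂ) * (a.choose e : ℂ) := by
    exact_mod_cast congrArg (Nat.cast (R := ℂ)) (Nat.descFactorial_eq_factorial_mul_choose a e)
  have hfne : ((e.factorial : ℕ) : ℂ) ≠ 0 := Nat.cast_ne_zero.mpr (Nat.factorial_ne_zero _)
  rw [hA]
  field_simp

/-- exponent supported on the ξ variables -/
def mlt (a : Fin n → ℕ) : (Fin n ⊕ Fin n) →₀ ℕ := ∑ i, Finsupp.single (Sum.inl i) (a i)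
/-- exponent supported on the z variables -/
def mrt (b : Fin n → ℕ) : (Fin n ⊕ Fin n) →₀ ℕ := ∑ i, Finsupp.single (Sum.inr i) (b i)

lemma mlt_apply_inl (a : Fin n → ℕ) (i : Fin n) : mlt a (Sum.inl i) = a i := by
  rw [mlt, Finsupp.finset_sum_apply, Finset.sum_eq_single i
    (fun j _ hji => by simp [Finsupp.single_apply, hji]) (by simp)]
  simp
lemma mlt_apply_inr (a : Fin n → ℕ) (i : Fin n) : mlt a (Sum.inr i) = 0 := by
  rw [mlt, Finsupp.finset_sum_apply]
  simp [Finsupp.single_apply]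
lemma mrt_apply_inl (b : Fin n → ℕ) (i : Fin n) : mrt b (Sum.inl i) = 0 := by
  rw [mrt, Finsupp.finset_sum_apply]
  simp [Finsupp.single_apply]
lemma mrt_apply_inr (b : Fin n → ℕ) (i : Fin n) : mrt b (Sum.inr i) = b i := by
  rw [mrt, Finsupp.finset_sum_apply, Finset.sum_eq_single i
    (fun j _ hji => by simp [Finsupp.single_apply, hji]) (by simp)]
  simp

lemma mlt_zero : mlt (0 : Fin n → ℕ) = 0 := by
  simp [mlt]
lemma mrt_zero : mrt (0 : Fin n → ℕ) = 0 := by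
  simp [mrt]

lemma mlt_sub (a γ : Fin n → ℕ) : mlt a - mlt γ = mlt (a - γ) := by
  ext j
  rcases j with i | i <;>
    simp [Finsupp.tsub_apply, mlt_apply_inl, mlt_apply_inr]
lemma mrt_sub (b γ : Fin n → ℕ) : mrt b - mrt γ = mrt (b - γ) := by
  ext j
  rcases j with i | i <;>
    simp [Finsupp.tsub_apply, mrt_apply_inl, mrt_apply_inr]
lemma mlt_add (a b : Fin n → ℕ) : mlt (a + b) = mlt a + mlt b := by
  ext j
  rcases j with i | i <;>
    simp [Finsupp.add_apply, mlt_apply_inl, mlt_apply_inr]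
lemma mrt_add (a b : Fin n → ℕ) : mrt (a + b) = mrt a + mrt b := by
  ext j
  rcases j with i | i <;>
    simp [Finsupp.add_apply, mrt_apply_inl, mrt_apply_inr]

lemma XiPow_eq_monomial (a : Fin n → ℕ) : XiPow a = monomial (mlt a) (1:ℂ) := by
  have h : ∏ x : Fin n ⊕ Fin n, (X x : P n) ^ (mlt a x) =
      ∏ x ∈ (mlt a).support, (X x : P n) ^ (mlt a x) :=
    (Finset.prod_subset (Finset.subset_univ _)
      (fun x _ hx => by rw [Finsupp.notMem_support_iff.mp hx, pow_zero])).symm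
  rw [← prod_X_pow_eq_monomial, ← h, Fintype.prod_sum_type]
  simp [XiPow, xiv, mlt_apply_inl, mlt_apply_inr]
lemma ZPow_eq_monomial (b : Fin n → ℕ) : ZvPow b = monomial (mrt b) (1:ℂ) := by
  have h : ∏ x : Fin n ⊕ Fin n, (X x : P n) ^ (mrt b x) =
      ∏ x ∈ (mrt b).support, (X x : P n) ^ (mrt b x) :=
    (Finset.prod_subset (Finset.subset_univ _)
      (fun x _ hx => by rw [Finsupp.notMem_support_iff.mp hx, pow_zero])).symm
  rw [← prod_X_pow_eq_monomial, ← h, Fintype.prod_sum_type]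
  simp [ZvPow, zv, mrt_apply_inl, mrt_apply_inr]

lemma aux_pderiv_pow_monomial {σ : Type*} [DecidableEq σ] (j : σ) (k : ℕ) (s : σ →₀ ℕ) (c : ℂ) :
    (((pderiv j : Derivation ℂ (MvPolynomial σ ℂ) (MvPolynomial σ ℂ)).toLinearMap) ^ k)
        (monomial s c) =
      monomial (s - Finsupp.single j k) (c * (((s j).descFactorial k : ℕ) : ℂ)) := by
  induction k with
  | zero => simp
  | succ k ih =>
      rw [pow_succ', Module.End.mul_apply, ih]
      have h1 : (pderiv j) (monomial (s - Finsupp.single j k)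
          (c * (((s j).descFactorial k : ℕ) : ℂ))) =
          monomial (s - Finsupp.single j k - Finsupp.single j 1)
            (c * (((s j).descFactorial k : ℕ) : ℂ) * ((s - Finsupp.single j k) j)) :=
        pderiv_monomial
      rw [show (((pderiv j : Derivation ℂ (MvPolynomial σ ℂ) (MvPolynomial σ ℂ)).toLinearMap))
          (monomial (s - Finsupp.single j k) (c * (((s j).descFactorial k : ℕ) : ℂ)))
          = (pderiv j) (monomial (s - Finsupp.single j k)
            (c * (((s j).descFactorial k : ℕ) : ℂ))) from rfl, h1]
      have h2 : s - Finsupp.single j k - Finsupp.single j 1 = s - Finsupp.single j (k+1) := by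
        rw [tsub_tsub, ← Finsupp.single_add]
      have h3 : (s - Finsupp.single j k) j = s j - k := by
        rw [Finsupp.tsub_apply, Finsupp.single_eq_same]
      rw [h2, h3]
      congr 1
      rw [Nat.descFactorial_succ]
      push_cast [Nat.descFactorial_succ]
      ring

lemma aux_list_sum_single_apply {σ : Type*} [DecidableEq σ] (γ : σ → ℕ) (l : List σ) (j : σ)
    (hj : j ∉ l) : ((l.map fun i => Finsupp.single i (γ i)).sum) j = 0 := by
  induction l with
  | nil => simp
  | cons i l ih =>
      simp only [List.mem_cons, not_or] at hj
      simp only [List.map_cons, List.sum_cons, Finsupp.add_apply, ih hj.2,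
        Finsupp.single_apply, add_zero]
      simp [Ne.symm hj.1]

lemma aux_list_prod_pderiv_pow_monomial {σ : Type*} [DecidableEq σ] (γ : σ → ℕ) :
    ∀ (l : List σ), l.Nodup → ∀ (s : σ →₀ ℕ) (c : ℂ),
      ((l.map fun j =>
          ((pderiv j : Derivation ℂ (MvPolynomial σ ℂ) (MvPolynomial σ ℂ)).toLinearMap ^ γ j)).prod)
          (monomial s c) =
        monomial (s - (l.map fun j => Finsupp.single j (γ j)).sum)
          (c * ((l.map fun j => (((s j).descFactorial (γ j) : ℕ) : ℂ)).prod)) := by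
  intro l
  induction l with
  | nil => intro _ s c; simp
  | cons j l ih =>
      intro hnd s c
      obtain ⟨hj, hnd'⟩ := List.nodup_cons.mp hnd
      simp only [List.map_cons, List.prod_cons, List.sum_cons]
      rw [Module.End.mul_apply, ih hnd' s c, aux_pderiv_pow_monomial]
      have h3 : (s - (l.map fun i => Finsupp.single i (γ i)).sum) j = s j := by
        rw [Finsupp.tsub_apply, aux_list_sum_single_apply γ l j hj, Nat.sub_zero]
      rw [h3, tsub_tsub, add_comm ((l.map fun i => Finsupp.single i (γ i)).sum)]
      congr 1
      ring

lemma Dz_monomial (γ : Fin n → ℕ) (s : (Fin n ⊕ Fin n) →₀ ℕ) (c : ℂ) :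
    Dz γ (monomial s c) =
      monomial (s - mrt γ) (c * ∏ i, (((s (Sum.inr i)).descFactorial (γ i) : ℕ) : ℂ)) := by
  have h1 : Dz (n := n) γ = (((List.finRange n).map (Sum.inr : Fin n → Fin n ⊕ Fin n)).map
      (fun j => ((pderiv j : Derivation ℂ (P n) (P n)).toLinearMap ^
        (Sum.elim (0 : Fin n → ℕ) γ) j))).prod := by
    rw [Dz, List.ofFn_eq_map, List.map_map]
    rfl
  rw [h1, aux_list_prod_pderiv_pow_monomial _ _
    ((List.nodup_finRange n).map Sum.inr_injective)]
  congr 1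
  · congr 1
    rw [List.map_map, ← List.ofFn_eq_map, List.sum_ofFn, mrt]
    rfl
  · congr 1
    rw [List.map_map, ← List.ofFn_eq_map, List.prod_ofFn]
    rfl

lemma Dxi_monomial (γ : Fin n → ℕ) (s : (Fin n ⊕ Fin n) →₀ ℕ) (c : ℂ) :
    Dxi γ (monomial s c) =
      monomial (s - mlt γ) (c * ∏ i, (((s (Sum.inl i)).descFactorial (γ i) : ℕ) : ℂ)) := by
  have h1 : Dxi (n := n) γ = (((List.finRange n).map (Sum.inl : Fin n → Fin n ⊕ Fin n)).map
      (fun j => ((pderiv j : Derivation ℂ (P n) (P n)).toLinearMap ^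
        (Sum.elim γ (0 : Fin n → ℕ)) j))).prod := by
    rw [Dxi, List.ofFn_eq_map, List.map_map]
    rfl
  rw [h1, aux_list_prod_pderiv_pow_monomial _ _
    ((List.nodup_finRange n).map Sum.inl_injective)]
  congr 1
  · congr 1
    rw [List.map_map, ← List.ofFn_eq_map, List.sum_ofFn, mlt]
    rfl
  · congr 1
    rw [List.map_map, ← List.ofFn_eq_map, List.prod_ofFn]
    rfl

/-- `∏ᵢ (aᵢ)_(γᵢ)` as a complex number -/
def descC (a γ : Fin n → ℕ) : ℂ := ∏ i, (((a i).descFactorial (γ i) : ℕ) : ℂ)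

/-- the scalar appearing in `astar` of two monomials -/
def termC (a b γ : Fin n → ℕ) : ℂ := (-1) ^ mdeg γ / (mfact γ : ℂ) * (descC a γ * descC b γ)

lemma descC_eq_zero {a γ : Fin n → ℕ} (h : ¬ γ ≤ a) : descC a γ = 0 := by
  obtain ⟨i, hi⟩ : ∃ i, a i < γ i := by
    simpa [Pi.le_def, not_forall, not_le] using h
  exact Finset.prod_eq_zero (Finset.mem_univ i)
    (by simp [Nat.descFactorial_eq_zero_iff_lt.mpr hi])

def piIic (a : Fin n → ℕ) : Finset (Fin n → ℕ) := Fintype.piFinset fun i => Finset.Iic (a i)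

lemma mem_piIic {a γ : Fin n → ℕ} : γ ∈ piIic a ↔ γ ≤ a := by
  simp [piIic, Fintype.mem_piFinset, Pi.le_def]

lemma mdeg_zero : mdeg (0 : Fin n → ℕ) = 0 := by simp [mdeg]
lemma mfact_zero : mfact (0 : Fin n → ℕ) = 1 := by simp [mfact]

lemma astar_XiPow_ZPow (a b : Fin n → ℕ) :
    astar 1 (XiPow a) (ZvPow b) =
      ∑ γ ∈ piIic a, termC a b γ • (monomial (mlt (a - γ) + mrt (b - γ)) (1:ℂ)) := by
  rw [astar]
  rw [finsum_eq_single _ (0 : Fin n → ℕ) (fun x hx => ?_)]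
  swap
  · -- terms with x ≠ 0 vanish since ∂^x kills ξ^a
    have hz : Dz x (XiPow a) = 0 := by
      rw [XiPow_eq_monomial, Dz_monomial]
      obtain ⟨i, hi⟩ := Function.ne_iff.mp hx
      have h0 : (((mlt a (Sum.inr i)).descFactorial (x i) : ℕ) : ℂ) = 0 := by
        rw [mlt_apply_inr]
        exact_mod_cast congrArg (Nat.cast (R := ℂ))
          (Nat.descFactorial_eq_zero_iff_lt.mpr (Nat.pos_of_ne_zero hi))
      rw [Finset.prod_eq_zero (Finset.mem_univ i) h0, mul_zero]
      simp
    rw [hz]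
    simp only [map_zero, zero_mul, smul_zero, finsum_zero]
  -- the remaining term at x = 0
  have hDz0 : Dz (0 : Fin n → ℕ) (XiPow a) = monomial (mlt a) (1:ℂ) := by
    rw [XiPow_eq_monomial, Dz_monomial, mrt_zero, tsub_zero]
    simp
  have hDxi0 : Dxi (0 : Fin n → ℕ) (ZvPow b) = monomial (mrt b) (1:ℂ) := by
    rw [ZPow_eq_monomial, Dxi_monomial, mlt_zero, tsub_zero]
    simp
  rw [hDz0, hDxi0]
  have hterm : (fun γ : Fin n → ℕ =>
      ((-(1:ℂ)) ^ (mdeg (0 : Fin n → ℕ) + mdeg γ) /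
          ((mfact (0 : Fin n → ℕ) : ℂ) * (mfact γ : ℂ))) •
        (Dxi γ (monomial (mlt a) (1:ℂ)) * Dz γ (monomial (mrt b) (1:ℂ)))) =
      (fun γ : Fin n → ℕ => termC a b γ • (monomial (mlt (a - γ) + mrt (b - γ)) (1:ℂ))) := by
    funext γ
    rw [Dxi_monomial, Dz_monomial, monomial_mul, one_mul, one_mul, mlt_sub, mrt_sub]
    rw [smul_monomial, smul_monomial]
    rw [mdeg_zero, mfact_zero, zero_add, Nat.cast_one, one_mul, smul_eq_mul, smul_eq_mul]
    have hda : (∏ i, (((mlt a (Sum.inl i)).descFactorial (γ i) : ℕ) : ℂ)) = descC a γ := by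
      rw [descC]
      exact Finset.prod_congr rfl fun i _ => by rw [mlt_apply_inl]
    have hdb : (∏ i, (((mrt b (Sum.inr i)).descFactorial (γ i) : ℕ) : ℂ)) = descC b γ := by
      rw [descC]
      exact Finset.prod_congr rfl fun i _ => by rw [mrt_apply_inr]
    rw [hda, hdb, termC]
    ring
  rw [hterm]
  apply finsum_eq_finset_sum_of_support_subset
  rw [Function.support_subset_iff']
  intro γ hγ
  have h0 : descC a γ = 0 := descC_eq_zero (by simpa [mem_piIic] using hγ)
  rw [termC, h0, zero_mul, mul_zero, zero_smul]

lemma lhs_eq (α β : Fin n → ℕ) :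
    XiPow β * astar 1 (XiPow α) (ZvPow (α + β)) =
      ∑ γ ∈ piIic (α + β), termC α (α + β) γ •
        (monomial (mlt (α + β - γ) + mrt (α + β - γ)) (1:ℂ)) := by
  rw [astar_XiPow_ZPow, Finset.mul_sum]
  have hstep : ∀ γ ∈ piIic α,
      XiPow β * termC α (α + β) γ • (monomial (mlt (α - γ) + mrt (α + β - γ)) (1:ℂ)) =
      termC α (α + β) γ • (monomial (mlt (α + β - γ) + mrt (α + β - γ)) (1:ℂ)) := by
    intro γ hγ
    have hγα : γ ≤ α := mem_piIic.mp hγ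
    rw [XiPow_eq_monomial, mul_smul_comm, monomial_mul, one_mul]
    have he : mlt β + (mlt (α - γ) + mrt (α + β - γ)) =
        mlt (α + β - γ) + mrt (α + β - γ) := by
      have hfun : β + (α - γ) = α + β - γ := by
        funext i
        have h2 : γ i ≤ α i := hγα i
        simp only [Pi.add_apply, Pi.sub_apply]
        omega
      rw [← add_assoc, ← mlt_add, hfun]
    rw [he]
  rw [Finset.sum_congr rfl hstep]
  apply Finset.sum_subset
  · intro γ hγ
    rw [mem_piIic] at hγ ⊢
    exact le_trans hγ (by intro i; simp)
  · intro γ _ hγ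
    have h0 : descC α γ = 0 := descC_eq_zero (by simpa [mem_piIic] using hγ)
    rw [termC, h0, zero_mul, mul_zero, zero_smul]

lemma rhs1_eq (α β : Fin n → ℕ) :
    ZvPow β * astar 1 (XiPow (α + β)) (ZvPow α) =
      ∑ γ ∈ piIic (α + β), termC α (α + β) γ •
        (monomial (mlt (α + β - γ) + mrt (α + β - γ)) (1:ℂ)) := by
  rw [astar_XiPow_ZPow, Finset.mul_sum]
  apply Finset.sum_congr rfl
  intro γ _
  by_cases hγα : γ ≤ α
  · rw [ZPow_eq_monomial, mul_smul_comm, monomial_mul, one_mul]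
    have he : mrt β + (mlt (α + β - γ) + mrt (α - γ)) =
        mlt (α + β - γ) + mrt (α + β - γ) := by
      have hfun : α - γ + β = α + β - γ := by
        funext i
        have h2 : γ i ≤ α i := hγα i
        simp only [Pi.add_apply, Pi.sub_apply]
        omega
      rw [add_comm (mrt β), add_assoc, ← mrt_add, hfun]
    rw [he]
    congr 1
    rw [termC, termC]
    ring
  · have h0 : descC α γ = 0 := descC_eq_zero hγα
    rw [termC, termC, h0, zero_mul, mul_zero, mul_zero, zero_smul, zero_smul, mul_zero]

lemma termC_prod (a b γ : Fin n → ℕ) :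
    termC a b γ = ∏ i, ((-1:ℂ) ^ γ i / (((γ i).factorial : ℕ) : ℂ) *
      ((((a i).descFactorial (γ i) : ℕ) : ℂ) * (((b i).descFactorial (γ i) : ℕ) : ℂ))) := by
  rw [termC, descC, descC]
  have hm : ((mfact γ : ℕ) : ℂ) = ∏ i, (((γ i).factorial : ℕ) : ℂ) := by
    rw [mfact]; push_cast; rfl
  have hs : ((-1:ℂ) ^ mdeg γ) = ∏ i, (-1:ℂ) ^ γ i := by
    rw [mdeg, Finset.prod_pow_eq_pow_sum]
  rw [hm, hs, Finset.prod_mul_distrib, Finset.prod_div_distrib, Finset.prod_mul_distrib]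

lemma scalar_identity (α β ε : Fin n → ℕ) :
    termC α (α + β) ε =
      ∑ γ ∈ piIic ε,
        ((∏ i, (β i).choose (γ i) * (α i + β i).descFactorial (γ i) : ℕ) : ℂ) *
          termC (α + β - γ) (α + β - γ) (ε - γ) := by
  have hterm : ∀ γ ∈ piIic ε,
      ((∏ i, (β i).choose (γ i) * (α i + β i).descFactorial (γ i) : ℕ) : ℂ) *
        termC (α + β - γ) (α + β - γ) (ε - γ) =
      ∏ i, ((((β i).choose (γ i) * (α i + β i).descFactorial (γ i) : ℕ) : ℂ) *
        ((-1:ℂ) ^ (ε i - γ i) / (((ε i - γ i).factorial : ℕ) : ℂ) *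
          ((((α i + β i - γ i).descFactorial (ε i - γ i) : ℕ) : ℂ) *
           (((α i + β i - γ i).descFactorial (ε i - γ i) : ℕ) : ℂ)))) := by
    intro γ _
    rw [termC_prod]
    rw [show ((∏ i, (β i).choose (γ i) * (α i + β i).descFactorial (γ i) : ℕ) : ℂ) =
      ∏ i, (((β i).choose (γ i) * (α i + β i).descFactorial (γ i) : ℕ) : ℂ) from by
        push_cast; rfl]
    rw [← Finset.prod_mul_distrib]
    apply Finset.prod_congr rfl
    intro i _
    simp only [Pi.add_apply, Pi.sub_apply]
  rw [Finset.sum_congr rfl hterm]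
  have hps := Finset.prod_univ_sum (fun i : Fin n => Finset.Iic (ε i))
    (fun i g => (((β i).choose g * (α i + β i).descFactorial g : ℕ) : ℂ) *
      ((-1:ℂ) ^ (ε i - g) / (((ε i - g).factorial : ℕ) : ℂ) *
        ((((α i + β i - g).descFactorial (ε i - g) : ℕ) : ℂ) *
         (((α i + β i - g).descFactorial (ε i - g) : ℕ) : ℂ))))
  rw [piIic, ← hps]
  rw [termC_prod]
  apply Finset.prod_congr rfl
  intro i _
  simp only [Pi.add_apply]
  exact aux_key (α i) (β i) (ε i)

lemma rhs2_eq (α β : Fin n → ℕ) :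
    (∑ᶠ γ : Fin n → ℕ,
        ((∏ i, (β i).choose (γ i) * (α i + β i).descFactorial (γ i) : ℕ) : ℂ) •
          astar 1 (XiPow (α + β - γ)) (ZvPow (α + β - γ))) =
      ∑ ε ∈ piIic (α + β),
        (∑ γ ∈ piIic ε,
          ((∏ i, (β i).choose (γ i) * (α i + β i).descFactorial (γ i) : ℕ) : ℂ) *
            termC (α + β - γ) (α + β - γ) (ε - γ)) •
          (monomial (mlt (α + β - ε) + mrt (α + β - ε)) (1:ℂ)) := by
  classical
  have hsupp : Function.support (fun γ : Fin n → ℕ =>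
      ((∏ i, (β i).choose (γ i) * (α i + β i).descFactorial (γ i) : ℕ) : ℂ) •
        astar 1 (XiPow (α + β - γ)) (ZvPow (α + β - γ))) ⊆ ↑(piIic (α + β)) := by
    rw [Function.support_subset_iff']
    intro γ hγ
    have hnle : ¬ γ ≤ α + β := by simpa [mem_piIic] using hγ
    have hβ : ¬ γ ≤ β := fun h => hnle (le_trans h (by intro i; simp))
    obtain ⟨i, hi⟩ : ∃ i, β i < γ i := by simpa [Pi.le_def, not_forall, not_le] using hβ
    have h0 : (∏ i, (β i).choose (γ i) * (α i + β i).descFactorial (γ i)) = 0 :=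
      Finset.prod_eq_zero (Finset.mem_univ i) (by rw [Nat.choose_eq_zero_of_lt hi, zero_mul])
    rw [h0, Nat.cast_zero, zero_smul]
  rw [finsum_eq_finset_sum_of_support_subset _ hsupp]
  have hexp : ∀ γ ∈ piIic (α + β),
      ((∏ i, (β i).choose (γ i) * (α i + β i).descFactorial (γ i) : ℕ) : ℂ) •
        astar 1 (XiPow (α + β - γ)) (ZvPow (α + β - γ)) =
      ∑ δ ∈ piIic (α + β - γ),
        (((∏ i, (β i).choose (γ i) * (α i + β i).descFactorial (γ i) : ℕ) : ℂ) *
          termC (α + β - γ) (α + β - γ) δ) •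
          (monomial (mlt (α + β - γ - δ) + mrt (α + β - γ - δ)) (1:ℂ)) := by
    intro γ _
    rw [astar_XiPow_ZPow, Finset.smul_sum]
    exact Finset.sum_congr rfl fun δ _ => smul_smul _ _ _
  rw [Finset.sum_congr rfl hexp]
  have hpack := Finset.sum_sigma' (piIic (α + β)) (fun γ => piIic (α + β - γ))
    (fun γ δ =>
      (((∏ i, (β i).choose (γ i) * (α i + β i).descFactorial (γ i) : ℕ) : ℂ) *
          termC (α + β - γ) (α + β - γ) δ) •
        (monomial (mlt (α + β - γ - δ) + mrt (α + β - γ - δ)) (1:ℂ)))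
  rw [hpack]
  refine Eq.trans (Finset.sum_nbij'
    (i := fun x : (Σ _ : Fin n → ℕ, Fin n → ℕ) =>
      (⟨x.1 + x.2, x.1⟩ : Σ _ : Fin n → ℕ, Fin n → ℕ))
    (j := fun y : (Σ _ : Fin n → ℕ, Fin n → ℕ) =>
      (⟨y.2, y.1 - y.2⟩ : Σ _ : Fin n → ℕ, Fin n → ℕ))
    (t := (piIic (α + β)).sigma fun ε => piIic ε)
    (g := fun y =>
      (((∏ i, (β i).choose (y.2 i) * (α i + β i).descFactorial (y.2 i) : ℕ) : ℂ) *
          termC (α + β - y.2) (α + β - y.2) (y.1 - y.2)) •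
        (monomial (mlt (α + β - y.1) + mrt (α + β - y.1)) (1:ℂ)))
    ?_ ?_ ?_ ?_ ?_) ?_
  · intro x hx
    simp only [Finset.mem_sigma, mem_piIic, Pi.le_def, Pi.add_apply, Pi.sub_apply] at hx ⊢
    obtain ⟨h1, h2⟩ := hx
    exact ⟨fun i => by have := h1 i; have := h2 i; omega, fun i => by omega⟩
  · intro y hy
    simp only [Finset.mem_sigma, mem_piIic, Pi.le_def, Pi.add_apply, Pi.sub_apply] at hy ⊢
    obtain ⟨h1, h2⟩ := hy
    exact ⟨fun i => by have := h1 i; have := h2 i; omega,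
           fun i => by have := h1 i; have := h2 i; omega⟩
  · intro x hx
    have h : x.1 + x.2 - x.1 = x.2 := by
      funext i; simp only [Pi.add_apply, Pi.sub_apply]; omega
    show (⟨x.1, x.1 + x.2 - x.1⟩ : Σ _ : Fin n → ℕ, Fin n → ℕ) = x
    rw [h]
  · intro y hy
    simp only [Finset.mem_sigma, mem_piIic, Pi.le_def] at hy
    have h : y.2 + (y.1 - y.2) = y.1 := by
      funext i
      have h2 : y.2 i ≤ y.1 i := hy.2 i
      simp only [Pi.add_apply, Pi.sub_apply]; omega
    show (⟨y.2 + (y.1 - y.2), y.2⟩ : Σ _ : Fin n → ℕ, Fin n → ℕ) = y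
    rw [h]
  · intro x hx
    have h1 : x.1 + x.2 - x.1 = x.2 := by
      funext i; simp only [Pi.add_apply, Pi.sub_apply]; omega
    have h2 : α + β - x.1 - x.2 = α + β - (x.1 + x.2) := by
      funext i; simp only [Pi.add_apply, Pi.sub_apply]; omega
    simp only [h1, h2]
  · rw [Finset.sum_sigma]
    exact Finset.sum_congr rfl fun ε _ => by rw [Finset.sum_smul]

end Aux

/-- ξ^β(ξ^α ∗ z^{α+β}) = z^β(ξ^{α+β} ∗ z^α); both equal
    Σ_{γ} C(β,γ)·((α+β)!/(α+β-γ)!)·(ξ^{α+β-γ} ∗ z^{α+β-γ}). -/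
theorem xi_z_symmetry (n : ℕ) (α β : Fin n → ℕ) :
    XiPow β * astar 1 (XiPow α) (ZvPow (α + β)) =
      ZvPow β * astar 1 (XiPow (α + β)) (ZvPow α) ∧
    XiPow β * astar 1 (XiPow α) (ZvPow (α + β)) =
      ∑ᶠ γ : Fin n → ℕ,
        ((∏ i, (β i).choose (γ i) * (α i + β i).descFactorial (γ i) : ℕ) : ℂ) •
          astar 1 (XiPow (α + β - γ)) (ZvPow (α + β - γ)) := by
  constructor
  · rw [lhs_eq, rhs1_eq]
  · rw [lhs_eq, rhs2_eq]
    exact Finset.sum_congr rfl fun ε _ => by rw [scalar_identity]
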